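/- arXiv:1503.05816 — 3 statements merged into one kernel-verified Lean document; each statement's English description precedes it below -/
import Mathlib

section
/- For any n×n real matrix A and reals a, b ≥ 0, the matrix exponential integral satisfies ∫₀^{a+b} e^{Ar} dr = ∫₀^a e^{Ar} dr + (∫₀^b e^{Ar} dr)(A ∫₀^a e^{Ar} dr + I). -/
open Matrix

/-- The entrywise integral `∫₀^σ e^{Ar} dr` of the matrix exponential. -/
noncomputable def expIntegral {n : ℕ} (A : Matrix (Fin n) (Fin n) ℝ) (σ : ℝ) :
    Matrix (Fin n) (Fin n) ℝ :=
  Matrix.of fun i j => ∫ r in (0 : ℝ)..σ, NormedSpace.exp (r • A) i j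

section aux

attribute [local instance] Matrix.linftyOpNormedRing Matrix.linftyOpNormedAlgebra

variable {n : ℕ}

open NormedSpace

lemma entry_norm_le (M : Matrix (Fin n) (Fin n) ℝ) (i j : Fin n) : ‖M i j‖ ≤ ‖M‖ := by
  have : ‖M i j‖₊ ≤ ‖M‖₊ := by
    rw [Matrix.linfty_opNNNorm_def]
    calc ‖M i j‖₊ ≤ ∑ k, ‖M i k‖₊ :=
          Finset.single_le_sum (f := fun k => ‖M i k‖₊) (fun k _ => zero_le) (Finset.mem_univ j)
      _ ≤ _ := Finset.le_sup (f := fun i => ∑ k, ‖M i k‖₊) (Finset.mem_univ i)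
  exact_mod_cast this

/-- entry evaluation as a CLM -/
noncomputable def entryCLM (i j : Fin n) : Matrix (Fin n) (Fin n) ℝ →L[ℝ] ℝ :=
  LinearMap.mkContinuous
    { toFun := fun M => M i j, map_add' := fun _ _ => rfl, map_smul' := fun _ _ => rfl } 1
    (fun M => by rw [one_mul]; exact entry_norm_le M i j)

lemma exp_continuous (A : Matrix (Fin n) (Fin n) ℝ) :
    Continuous fun r : ℝ => exp (r • A) :=
  NormedSpace.exp_continuous.comp (continuous_id.smul continuous_const)

lemma expIntegral_eq (A : Matrix (Fin n) (Fin n) ℝ) (σ : ℝ) :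
    expIntegral A σ = ∫ r in (0:ℝ)..σ, exp (r • A) := by
  ext i j
  have := (entryCLM i j).intervalIntegral_comp_comm (μ := MeasureTheory.volume)
    (f := fun r : ℝ => exp (r • A)) (a := 0) (b := σ)
    ((exp_continuous A).intervalIntegrable 0 σ)
  simp only [expIntegral, Matrix.of_apply]; exact this

lemma exp_eq_A_mul_integral_add_one (A : Matrix (Fin n) (Fin n) ℝ) (a : ℝ) :
    A * (∫ r in (0:ℝ)..a, exp (r • A)) + 1 = exp (a • A) := by
  have h2 : (∫ r in (0:ℝ)..a, A * exp (r • A)) = exp (a • A) - exp ((0:ℝ) • A) :=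
    intervalIntegral.integral_eq_sub_of_hasDerivAt
      (fun r _ => hasDerivAt_exp_smul_const' (𝕂 := ℝ) A r)
      ((continuous_const.mul (exp_continuous A)).intervalIntegrable 0 a)
  have h3 := (ContinuousLinearMap.mul ℝ (Matrix (Fin n) (Fin n) ℝ) A).intervalIntegral_comp_comm
    (μ := MeasureTheory.volume) (a := 0) (b := a)
    ((exp_continuous A).intervalIntegrable 0 a)
  simp only [ContinuousLinearMap.mul_apply'] at h3
  rw [← h3, h2, zero_smul, NormedSpace.exp_zero]
  abel

/-- The semigroup-type identity for the matrix exponential integral: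
`∫₀^{a+b} e^{Ar} dr = ∫₀^a e^{Ar} dr + (∫₀^b e^{Ar} dr)(A ∫₀^a e^{Ar} dr + I)`. -/
theorem expIntegral_add {n : ℕ} (A : Matrix (Fin n) (Fin n) ℝ)
    (a b : ℝ) (ha : 0 ≤ a) (hb : 0 ≤ b) :
    expIntegral A (a + b) =
      expIntegral A a + expIntegral A b * (A * expIntegral A a + 1) := by
  rw [expIntegral_eq, expIntegral_eq, expIntegral_eq, exp_eq_A_mul_integral_add_one]
  have hint : ∀ u v : ℝ, _ :=
    fun u v => (exp_continuous A).intervalIntegrable (μ := MeasureTheory.volume) u v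
  rw [← intervalIntegral.integral_add_adjacent_intervals (hint 0 a) (hint a (a + b))]
  congr 1
  have hshift := intervalIntegral.integral_comp_add_right (a := (0:ℝ)) (b := b)
    (fun r : ℝ => exp (r • A)) a
  rw [zero_add] at hshift
  calc (∫ r in a..(a + b), exp (r • A))
      = ∫ s in (0:ℝ)..b, exp ((s + a) • A) := by rw [hshift, add_comm a b]
    _ = ∫ s in (0:ℝ)..b, exp (s • A) * exp (a • A) := by
        apply intervalIntegral.integral_congr
        intro s _
        simp only
        rw [add_smul]; exact NormedSpace.exp_add_of_commute (((Commute.refl A).smul_left s).smul_right a)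
    _ = (∫ s in (0:ℝ)..b, exp (s • A)) * exp (a • A) := by
        have h4 := ((ContinuousLinearMap.mul ℝ
            (Matrix (Fin n) (Fin n) ℝ)).flip (exp (a • A))).intervalIntegral_comp_comm
          (μ := MeasureTheory.volume) (a := 0) (b := b) (hint 0 b)
        simpa [ContinuousLinearMap.flip_apply, ContinuousLinearMap.mul_apply'] using h4

end aux
end

section
/- Polytopic embedding of matrix polynomials (scalar quadratic-form version): let L₀, …, L_N be symmetric n×n real matrices, χ > 0, and define Φ̲_i := Σ_{k=0}^{i} L_k χ^k for i = 0, …, N. Fix x ∈ ℝⁿ. If xᵀΦ̲_i x ≤ 0 for all i ∈ {0, …, N}, then xᵀ(Σ_{k=0}^{N} L_k σ^k) x ≤ 0 for every σ ∈ [0, χ]. -/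
open Matrix Finset

private lemma scalar_embed (b : ℕ → ℝ) (N : ℕ)
    (h : ∀ i ≤ N, ∑ k ∈ range (i + 1), b k ≤ 0)
    (t : ℝ) (ht0 : 0 ≤ t) (ht1 : t ≤ 1) :
    ∑ k ∈ range (N + 1), t ^ k * b k ≤ 0 := by
  have habel := Finset.sum_range_by_parts (fun i => t ^ i) b (N + 1)
  simp only [smul_eq_mul, Nat.add_sub_cancel] at habel
  rw [habel]
  have h1 : t ^ N * ∑ i ∈ range (N + 1), b i ≤ 0 :=
    mul_nonpos_of_nonneg_of_nonpos (pow_nonneg ht0 N) (h N le_rfl)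
  have h2 : 0 ≤ ∑ i ∈ range N, (t ^ (i + 1) - t ^ i) * ∑ j ∈ range (i + 1), b j := by
    apply Finset.sum_nonneg
    intro i hi
    have h3 : t ^ (i + 1) ≤ t ^ i := pow_le_pow_of_le_one ht0 ht1 (Nat.le_succ i)
    have h4 := h i (le_of_lt (Finset.mem_range.mp hi))
    have h5 := mul_nonneg (neg_nonneg.2 (sub_nonpos.2 h3))
      (neg_nonneg.2 h4)
    rw [neg_mul_neg] at h5
    exact h5
  linarith

/-- Polytopic embedding of matrix polynomials (lower-bound, quadratic-form version):
if the quadratic form of each partial-sum vertex `Φ̲_i = Σ_{k=0}^{i} L_k χ^k` at `x`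
is nonpositive, then `xᵀ(Σ_{k=0}^{N} L_k σ^k)x ≤ 0` for every `σ ∈ [0, χ]`. -/
theorem polytopic_embedding_lower {n N : ℕ}
    (L : ℕ → Matrix (Fin n) (Fin n) ℝ) (hL : ∀ k, (L k).IsSymm)
    (χ : ℝ) (hχ : 0 < χ) (x : Fin n → ℝ)
    (hvert : ∀ i ≤ N, x ⬝ᵥ (∑ k ∈ range (i + 1), χ ^ k • L k).mulVec x ≤ 0) :
    ∀ σ ∈ Set.Icc (0 : ℝ) χ,
      x ⬝ᵥ (∑ k ∈ range (N + 1), σ ^ k • L k).mulVec x ≤ 0 := by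
  intro σ hσ
  obtain ⟨hσ0, hσχ⟩ := hσ
  -- expand quadratic form of a sum
  have key : ∀ (c : ℝ) (m : ℕ),
      x ⬝ᵥ (∑ k ∈ range m, c ^ k • L k).mulVec x
        = ∑ k ∈ range m, c ^ k * (x ⬝ᵥ (L k).mulVec x) := by
    intro c m
    induction m with
    | zero => simp
    | succ m ih =>
      rw [Finset.sum_range_succ, Finset.sum_range_succ, Matrix.add_mulVec,
        dotProduct_add, ih, Matrix.smul_mulVec, dotProduct_smul, smul_eq_mul]
  rw [key]
  set c : ℕ → ℝ := fun k => x ⬝ᵥ (L k).mulVec x with hc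
  have hb : ∀ i ≤ N, ∑ k ∈ range (i + 1), χ ^ k * c k ≤ 0 := by
    intro i hi
    have := hvert i hi
    rwa [key] at this
  have ht0 : 0 ≤ σ / χ := div_nonneg hσ0 hχ.le
  have ht1 : σ / χ ≤ 1 := (div_le_one hχ).mpr hσχ
  have := scalar_embed (fun k => χ ^ k * c k) N hb (σ / χ) ht0 ht1
  have heq : ∀ k, (σ / χ) ^ k * (χ ^ k * c k) = σ ^ k * c k := by
    intro k
    rw [div_pow, ← mul_assoc, div_mul_cancel₀]
    exact pow_ne_zero k hχ.ne'
  calc ∑ k ∈ range (N + 1), σ ^ k * c k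
      = ∑ k ∈ range (N + 1), (σ / χ) ^ k * (χ ^ k * c k) := by
        exact Finset.sum_congr rfl fun k _ => (heq k).symm
    _ ≤ 0 := this
end

section
/- Upper-bound version of the polytopic embedding: let L₀, …, L_N be symmetric n×n real matrices, χ > 0, and define Φ̄_i := Σ_{k=0}^{i} L_k χ^k. Fix x ∈ ℝⁿ. If xᵀΦ̄_i x ≥ 0 for all i ∈ {0, …, N}, then xᵀ(Σ_{k=0}^{N} L_k σ^k) x ≥ 0 for every σ ∈ [0, χ]. -/
open Matrix Finset

/-- Abel-type bound: if all partial sums of `b` up to `N` are nonnegative and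
`0 ≤ t ≤ 1`, then `t^N * S_N ≤ Σ t^k b_k` (hence the RHS is nonnegative). -/
lemma abel_aux (b : ℕ → ℝ) (t : ℝ) (ht0 : 0 ≤ t) (ht1 : t ≤ 1) :
    ∀ N, (∀ i ≤ N, 0 ≤ ∑ k ∈ range (i + 1), b k) →
      t ^ N * (∑ k ∈ range (N + 1), b k) ≤ ∑ k ∈ range (N + 1), t ^ k * b k := by
  intro N
  induction N with
  | zero => intro _; simp
  | succ N ih =>
    intro h
    have hIH := ih (fun i hi => h i (by omega))
    have hSN : 0 ≤ ∑ k ∈ range (N + 1), b k := h N (by omega)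
    rw [Finset.sum_range_succ, Finset.sum_range_succ (fun k => t ^ k * b k)]
    have key : t ^ (N + 1) * ((∑ k ∈ range (N + 1), b k) + b (N + 1))
        ≤ t ^ N * (∑ k ∈ range (N + 1), b k) + t ^ (N + 1) * b (N + 1) := by
      have : t ^ (N + 1) * (∑ k ∈ range (N + 1), b k)
          ≤ t ^ N * (∑ k ∈ range (N + 1), b k) := by
        apply mul_le_mul_of_nonneg_right _ hSN
        exact pow_le_pow_of_le_one ht0 ht1 (by omega)
      nlinarith
    calc t ^ (N + 1) * ((∑ k ∈ range (N + 1), b k) + b (N + 1))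
        ≤ t ^ N * (∑ k ∈ range (N + 1), b k) + t ^ (N + 1) * b (N + 1) := key
      _ ≤ (∑ k ∈ range (N + 1), t ^ k * b k) + t ^ (N + 1) * b (N + 1) := by linarith

/-- Polytopic embedding of matrix polynomials (upper-bound, quadratic-form version):
if the quadratic form of each partial-sum vertex `Φ̄_i = Σ_{k=0}^{i} L_k χ^k` at `x`
is nonnegative, then `xᵀ(Σ_{k=0}^{N} L_k σ^k)x ≥ 0` for every `σ ∈ [0, χ]`. -/
theorem polytopic_embedding_upper {n N : ℕ}
    (L : ℕ → Matrix (Fin n) (Fin n) ℝ) (hL : ∀ k, (L k).IsSymm)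
    (χ : ℝ) (hχ : 0 < χ) (x : Fin n → ℝ)
    (hvert : ∀ i ≤ N, 0 ≤ x ⬝ᵥ (∑ k ∈ range (i + 1), χ ^ k • L k).mulVec x) :
    ∀ σ ∈ Set.Icc (0 : ℝ) χ,
      0 ≤ x ⬝ᵥ (∑ k ∈ range (N + 1), σ ^ k • L k).mulVec x := by
  intro σ hσ
  obtain ⟨hσ0, hσχ⟩ := hσ
  set a : ℕ → ℝ := fun k => x ⬝ᵥ (L k).mulVec x with ha
  have hexp : ∀ (c : ℝ) (m : ℕ),
      x ⬝ᵥ (∑ k ∈ range (m + 1), c ^ k • L k).mulVec x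
        = ∑ k ∈ range (m + 1), c ^ k * a k := by
    intro c m
    have hsum : (∑ k ∈ range (m + 1), c ^ k • L k) *ᵥ x
        = ∑ k ∈ range (m + 1), (c ^ k • L k) *ᵥ x :=
      map_sum (Matrix.mulVec.addMonoidHomLeft x) _ _
    rw [hsum]
    simp only [dotProduct, Finset.sum_apply, Finset.mul_sum]
    rw [Finset.sum_comm]
    refine Finset.sum_congr rfl fun k _ => ?_
    simp [Matrix.smul_mulVec, dotProduct, Finset.mul_sum, mul_left_comm, ha]
  rw [hexp]
  set t : ℝ := σ / χ with htdef
  have ht0 : 0 ≤ t := div_nonneg hσ0 hχ.le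
  have ht1 : t ≤ 1 := (div_le_one hχ).mpr hσχ
  set b : ℕ → ℝ := fun k => χ ^ k * a k with hb
  have hσt : ∀ k, σ ^ k * a k = t ^ k * b k := by
    intro k
    have : σ = t * χ := (div_mul_cancel₀ σ hχ.ne').symm
    rw [this, hb, mul_pow]
    ring
  have hbsum : ∀ i ≤ N, 0 ≤ ∑ k ∈ range (i + 1), b k := by
    intro i hi
    have := hvert i hi
    rwa [hexp] at this
  calc (0 : ℝ) ≤ t ^ N * (∑ k ∈ range (N + 1), b k) :=
        mul_nonneg (pow_nonneg ht0 N) (hbsum N le_rfl)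
    _ ≤ ∑ k ∈ range (N + 1), t ^ k * b k := abel_aux b t ht0 ht1 N hbsum
    _ = ∑ k ∈ range (N + 1), σ ^ k * a k :=
        Finset.sum_congr rfl fun k _ => (hσt k).symm
end
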